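/- Let y be a nondegenerate L² map from D to ℝ^d with polar factorization y = y* ∘ X, where y* is the unique rearrangement of y with convex potential and X is a Lebesgue-measure-preserving map of D. Then X is the unique (up to almost-everywhere equality) minimizer of the functional X′ ↦ ∫_D |X′(a) − y(a)|² da over all Lebesgue-measure-preserving maps X′ of D. -/

import Mathlib

open MeasureTheory Set Filter Topology
open scoped RealInnerProductSpace

noncomputable section

/-- `D` is the closure of a bounded connected open set in `ℝ^d`, its boundary is
Lebesgue-negligible, and it has Lebesgue measure `1`. -/
def IsNiceDomain {d : ℕ} (D : Set (EuclideanSpace ℝ (Fin d))) : Prop :=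
  (∃ U : Set (EuclideanSpace ℝ (Fin d)),
      IsOpen U ∧ IsConnected U ∧ Bornology.IsBounded U ∧ D = closure U) ∧
  volume (frontier D) = 0 ∧ volume D = 1

/-- The map `y` belongs to the class `C` of maps with a convex potential. -/
def HasConvexPotential {d : ℕ} (D : Set (EuclideanSpace ℝ (Fin d)))
    (y : EuclideanSpace ℝ (Fin d) → EuclideanSpace ℝ (Fin d)) : Prop :=
  ∃ p : EuclideanSpace ℝ (Fin d) → EReal,
    LowerSemicontinuous p ∧
    (∀ x z : EuclideanSpace ℝ (Fin d), ∀ t : ℝ, 0 ≤ t → t ≤ 1 →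
      p (t • x + (1 - t) • z) ≤ (t : EReal) * p x + ((1 - t : ℝ) : EReal) * p z) ∧
    (∀ᵐ x ∂(volume.restrict D), ∃ f : EuclideanSpace ℝ (Fin d) → ℝ,
      (∀ᶠ z in nhds x, p z = (f z : EReal)) ∧ HasGradientAt f (y x) x)

/-- `y` is nondegenerate: preimages of Lebesgue-negligible sets are negligible (in `D`). -/
def Nondegenerate {d : ℕ} (D : Set (EuclideanSpace ℝ (Fin d)))
    (y : EuclideanSpace ℝ (Fin d) → EuclideanSpace ℝ (Fin d)) : Prop :=
  ∀ N : Set (EuclideanSpace ℝ (Fin d)), volume N = 0 → volume (y ⁻¹' N ∩ D) = 0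

/-- A (Borel) Lebesgue-measure-preserving map of `D`. -/
def MeasurePreservingMapOf {d : ℕ} (D : Set (EuclideanSpace ℝ (Fin d)))
    (X : EuclideanSpace ℝ (Fin d) → EuclideanSpace ℝ (Fin d)) : Prop :=
  Measurable X ∧ MapsTo X D D ∧
    Measure.map X (volume.restrict D) = volume.restrict D

/-- A gradient of an `EReal`-valued convex function, at a point near which the function is
real-valued, is a subgradient. -/
lemma subgrad_of_gradient {d : ℕ} {p : EuclideanSpace ℝ (Fin d) → EReal}
    (hconv : ∀ x z : EuclideanSpace ℝ (Fin d), ∀ t : ℝ, 0 ≤ t → t ≤ 1 →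
      p (t • x + (1 - t) • z) ≤ (t : EReal) * p x + ((1 - t : ℝ) : EReal) * p z)
    {x v : EuclideanSpace ℝ (Fin d)} {f : EuclideanSpace ℝ (Fin d) → ℝ}
    (hev : ∀ᶠ z in nhds x, p z = (f z : EReal)) (hf : HasGradientAt f v x) :
    ∀ z, ((f x + ⟪v, z - x⟫ : ℝ) : EReal) ≤ p z := by
  intro z
  have hx : p x = (f x : EReal) := hev.self_of_nhds
  set c : ℝ → EuclideanSpace ℝ (Fin d) := fun t => x + t • (z - x) with hc_def
  have hc0 : c 0 = x := by simp [hc_def]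
  have hc_cont : Continuous c := by continuity
  have hc_tendsto : Tendsto c (𝓝 0) (𝓝 x) := by
    simpa [hc0] using hc_cont.tendsto 0
  have hev' : ∀ᶠ t in 𝓝 (0 : ℝ), p (c t) = (f (c t) : EReal) := hc_tendsto.eventually hev
  -- the convexity inequality along the segment
  have hcv : ∀ t : ℝ, 0 < t → t ≤ 1 →
      p (c t) ≤ (((1 - t : ℝ)) : EReal) * (f x : EReal) + (t : EReal) * p z := by
    intro t ht0 ht1
    have h := hconv x z (1 - t) (by linarith) (by linarith)
    have harg : (1 - t) • x + (1 - (1 - t)) • z = c t := by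
      simp only [hc_def]
      module
    rw [harg] at h
    simpa [hx] using h
  -- derivative of f along the segment
  have hderiv : HasDerivAt (fun t => f (c t)) ⟪v, z - x⟫ 0 := by
    have h1 : HasDerivAt (fun t : ℝ => t • (z - x)) (z - x) 0 := by
      simpa using (hasDerivAt_id (0 : ℝ)).smul_const (z - x)
    have h2 : HasDerivAt c (z - x) 0 := h1.const_add x
    have h3 : HasFDerivAt f (InnerProductSpace.toDual ℝ (EuclideanSpace ℝ (Fin d)) v) (c 0) := by
      rw [hc0]; exact hf.hasFDerivAt
    simpa [Function.comp_def] using h3.comp_hasDerivAt 0 h2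
  rcases eq_top_or_lt_top (p z) with htop | hlt
  · simp [htop]
  rcases eq_bot_or_bot_lt (p z) with hbotz | hbotz
  · -- bottom case: contradiction
    exfalso
    have hsmall : ∀ᶠ t in 𝓝[>] (0 : ℝ), p (c t) = (f (c t) : EReal) ∧ 0 < t ∧ t ≤ 1 := by
      filter_upwards [nhdsWithin_le_nhds hev',
        nhdsWithin_le_nhds (eventually_lt_nhds (zero_lt_one)), self_mem_nhdsWithin]
        with t h1 h2 h3
      exact ⟨h1, h3, le_of_lt h2⟩
    obtain ⟨t, h1, ht0, ht1⟩ := hsmall.exists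
    have := hcv t ht0 ht1
    rw [hbotz, h1] at this
    have hb : ((t : EReal)) * (⊥ : EReal) = ⊥ := EReal.coe_mul_bot_of_pos ht0
    rw [hb] at this
    have : (f (c t) : EReal) ≤ ⊥ := le_trans this (by
      rw [← EReal.coe_mul]
      exact (EReal.add_bot _).le)
    simp at this
  · -- real case
    set r : ℝ := (p z).toReal with hr_def
    have hrz : p z = (r : EReal) := (EReal.coe_toReal (ne_of_lt hlt) (ne_of_gt hbotz)).symm
    rw [hrz]
    rw [EReal.coe_le_coe_iff]
    -- slope inequality
    have hslope : ∀ᶠ t in 𝓝[>] (0 : ℝ), slope (fun t => f (c t)) 0 t ≤ r - f x := by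
      filter_upwards [nhdsWithin_le_nhds hev',
        nhdsWithin_le_nhds (eventually_lt_nhds (zero_lt_one)), self_mem_nhdsWithin]
        with t h1 h2 h3
      have := hcv t h3 h2.le
      rw [hrz, h1, ← EReal.coe_mul, ← EReal.coe_mul, ← EReal.coe_add, EReal.coe_le_coe_iff]
        at this
      have h3' : (0 : ℝ) < t := h3
      have hts : f (c t) - f (c 0) ≤ t * (r - f x) := by rw [hc0]; nlinarith
      rw [slope_def_field, sub_zero, div_le_iff₀ h3']
      nlinarith
    have htend : Tendsto (slope (fun t => f (c t)) 0) (𝓝[>] (0:ℝ)) (𝓝 ⟪v, z - x⟫) := by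
      have := hasDerivAt_iff_tendsto_slope.1 hderiv
      exact this.mono_left (nhdsWithin_mono 0 (fun t ht => ne_of_gt ht))
    have := le_of_tendsto htend hslope
    linarith

lemma fderiv_eq_of_subgrad {d : ℕ} {φ : EuclideanSpace ℝ (Fin d) → ℝ}
    {L : EuclideanSpace ℝ (Fin d) →L[ℝ] ℝ} {b x : EuclideanSpace ℝ (Fin d)}
    (hL : HasFDerivAt φ L b) (hsub : ∀ c, φ b + ⟪x, c - b⟫ ≤ φ c) :
    ∀ u, L u = ⟪x, u⟫ := by
  intro u
  set g : ℝ → ℝ := fun t => φ (b + t • u) with hg_def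
  have hg0 : g 0 = φ b := by simp [hg_def]
  have hderiv : HasDerivAt g (L u) 0 := by
    have h1 : HasDerivAt (fun t : ℝ => t • u) u 0 := by
      simpa using (hasDerivAt_id (0 : ℝ)).smul_const u
    have h2 : HasDerivAt (fun t : ℝ => b + t • u) u 0 := h1.const_add b
    have h3 : HasFDerivAt φ L (b + (0:ℝ) • u) := by simpa using hL
    simpa [Function.comp_def] using h3.comp_hasDerivAt 0 h2
  have hsub' : ∀ t : ℝ, φ b + t * ⟪x, u⟫ ≤ g t := by
    intro t
    have h := hsub (b + t • u)
    rw [add_sub_cancel_left, real_inner_smul_right] at h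
    exact h
  have htendsto := hasDerivAt_iff_tendsto_slope.1 hderiv
  have hge : ⟪x, u⟫ ≤ L u := by
    have htend : Tendsto (slope g 0) (𝓝[>] (0:ℝ)) (𝓝 (L u)) :=
      htendsto.mono_left (nhdsWithin_mono 0 (fun t ht => ne_of_gt ht))
    refine ge_of_tendsto htend ?_
    filter_upwards [self_mem_nhdsWithin] with t ht
    have ht' : (0:ℝ) < t := ht
    rw [slope_def_field, sub_zero, le_div_iff₀ ht']
    have := hsub' t
    rw [hg0] at *
    nlinarith
  have hle : L u ≤ ⟪x, u⟫ := by
    have htend : Tendsto (slope g 0) (𝓝[<] (0:ℝ)) (𝓝 (L u)) :=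
      htendsto.mono_left (nhdsWithin_mono 0 (fun t ht => ne_of_lt ht))
    refine le_of_tendsto htend ?_
    filter_upwards [self_mem_nhdsWithin] with t ht
    have ht' : t < 0 := ht
    rw [slope_def_field, sub_zero, div_le_iff_of_neg ht']
    have := hsub' t
    rw [hg0] at *
    nlinarith
  linarith

lemma subgrad_unique_of_differentiable {d : ℕ} {φ : EuclideanSpace ℝ (Fin d) → ℝ}
    {b x₁ x₂ : EuclideanSpace ℝ (Fin d)}
    (hd : DifferentiableAt ℝ φ b)
    (h1 : ∀ c, φ b + ⟪x₁, c - b⟫ ≤ φ c) (h2 : ∀ c, φ b + ⟪x₂, c - b⟫ ≤ φ c) :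
    x₁ = x₂ := by
  have hL := hd.hasFDerivAt
  have e1 := fderiv_eq_of_subgrad hL h1
  have e2 := fderiv_eq_of_subgrad hL h2
  exact ext_inner_right ℝ (fun u => (e1 u).symm.trans (e2 u))

/-- The subgradient relation for an `EReal`-valued function, stated with real values. -/
def IsSubgrad {d : ℕ} (p : EuclideanSpace ℝ (Fin d) → EReal)
    (b x : EuclideanSpace ℝ (Fin d)) : Prop :=
  ∀ z, (((p x).toReal + ⟪b, z - x⟫ : ℝ) : EReal) ≤ p z

set_option maxHeartbeats 2000000 in
/-- **The measure-preserving factor is the closest measure-preserving map.**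
If `y = y* ∘ X` is the polar factorization of the nondegenerate `L²` map `y`, then `X` is
the unique (up to a.e. equality) minimizer of `X' ↦ ∫_D |X'(a) - y(a)|² da` over all
Lebesgue-measure-preserving maps `X'` of `D`. -/
theorem polar_factor_minimizes
    {d : ℕ} (D : Set (EuclideanSpace ℝ (Fin d))) (hD : IsNiceDomain D)
    (y : EuclideanSpace ℝ (Fin d) → EuclideanSpace ℝ (Fin d))
    (hy : Measurable y) (hyL2 : MemLp y 2 (volume.restrict D))
    (hynd : Nondegenerate D y)
    -- `ys = y*` : the unique rearrangement of `y` in the class `C`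
    (ys : EuclideanSpace ℝ (Fin d) → EuclideanSpace ℝ (Fin d))
    (hysm : Measurable ys) (hysC : HasConvexPotential D ys)
    (hysr : Measure.map ys (volume.restrict D) = Measure.map y (volume.restrict D))
    -- `X` : the measure-preserving factor of the polar factorization `y = y* ∘ X`
    (X : EuclideanSpace ℝ (Fin d) → EuclideanSpace ℝ (Fin d))
    (hX : MeasurePreservingMapOf D X)
    (hfact : ∀ᵐ a ∂(volume.restrict D), y a = ys (X a)) :
    ∀ X' : EuclideanSpace ℝ (Fin d) → EuclideanSpace ℝ (Fin d),
      MeasurePreservingMapOf D X' →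
      (∫ a in D, ‖X a - y a‖ ^ 2) ≤ (∫ a in D, ‖X' a - y a‖ ^ 2) ∧
      ((∫ a in D, ‖X' a - y a‖ ^ 2) = (∫ a in D, ‖X a - y a‖ ^ 2) →
        X' =ᵐ[volume.restrict D] X) := by
  intro X' hX'
  classical
  obtain ⟨⟨U, hUo, hUc, hUb, hDU⟩, hfr, hvol⟩ := hD
  have hDclosed : IsClosed D := by rw [hDU]; exact isClosed_closure
  have hDmeas : MeasurableSet D := hDclosed.measurableSet
  have hDbdd : Bornology.IsBounded D := by rw [hDU]; exact hUb.closure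
  obtain ⟨R, hR⟩ := isBounded_iff_forall_norm_le.1 hDbdd
  set μ : Measure (EuclideanSpace ℝ (Fin d)) := volume.restrict D with hμdef
  have hμuniv : μ univ = 1 := by rw [hμdef, Measure.restrict_apply_univ]; exact hvol
  haveI : IsFiniteMeasure μ := ⟨by rw [hμuniv]; exact ENNReal.one_lt_top⟩
  have hμ0 : μ ≠ 0 := by
    intro h
    rw [h] at hμuniv
    simp at hμuniv
  haveI : (ae μ).NeBot := ae_neBot.2 hμ0
  obtain ⟨p, hplsc, hpconv, hpdiff⟩ := hysC
  have hpmeas : Measurable p := hplsc.measurable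
  have hmemD : ∀ᵐ a ∂μ, a ∈ D := ae_restrict_mem hDmeas
  -- base point
  obtain ⟨x0, hx0D, f0, hev0, hgrad0⟩ := (hmemD.and hpdiff).exists
  set y0 : EuclideanSpace ℝ (Fin d) := ys x0 with hy0def
  set r0 : ℝ := f0 x0 with hr0def
  have hpx0 : p x0 = (r0 : EReal) := hev0.self_of_nhds
  have key0 : ∀ z, ((r0 + ⟪y0, z - x0⟫ : ℝ) : EReal) ≤ p z :=
    subgrad_of_gradient hpconv hev0 hgrad0
  have hbot : ∀ z, p z ≠ ⊥ := by
    intro z hz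
    have h := key0 z
    rw [hz, le_bot_iff] at h
    exact EReal.coe_ne_bot _ h
  have hPcoe : ∀ {x : EuclideanSpace ℝ (Fin d)}, p x ≠ ⊤ →
      p x = (((p x).toReal : ℝ) : EReal) := fun hx => (EReal.coe_toReal hx (hbot _)).symm
  set Dfin : Set (EuclideanSpace ℝ (Fin d)) := {x | x ∈ D ∧ p x ≠ ⊤} with hDfin
  have hx0fin : x0 ∈ Dfin := ⟨hx0D, by rw [hpx0]; exact EReal.coe_ne_top r0⟩
  have hPlow : ∀ x ∈ Dfin, r0 + ⟪y0, x - x0⟫ ≤ (p x).toReal := by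
    intro x hx
    have h := key0 x
    rw [hPcoe hx.2, EReal.coe_le_coe_iff] at h
    exact h
  have hR0 : 0 ≤ R := le_trans (norm_nonneg x0) (hR x0 hx0D)
  -- the (truncated) Legendre transform of `p`
  set φ : EuclideanSpace ℝ (Fin d) → ℝ :=
    fun b => sSup ((fun x => ⟪b, x⟫ - (p x).toReal) '' Dfin) with hφdef
  have hbddA : ∀ b, BddAbove ((fun x => ⟪b, x⟫ - (p x).toReal) '' Dfin) := by
    intro b
    refine ⟨‖b‖ * R + |r0| + ‖y0‖ * (R + ‖x0‖), ?_⟩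
    rintro v ⟨x, hx, rfl⟩
    dsimp only
    have h1 : ⟪b, x⟫ ≤ ‖b‖ * R := by
      refine le_trans (real_inner_le_norm b x) ?_
      have := hR x hx.1
      nlinarith [norm_nonneg b]
    have h2 := hPlow x hx
    have hxx : ‖x - x0‖ ≤ R + ‖x0‖ := by
      refine le_trans (norm_sub_le _ _) ?_
      have := hR x hx.1
      linarith
    have h3 : -(‖y0‖ * (R + ‖x0‖)) ≤ ⟪y0, x - x0⟫ := by
      have h4 := abs_real_inner_le_norm y0 (x - x0)
      have h5 : |⟪y0, x - x0⟫| ≤ ‖y0‖ * (R + ‖x0‖) := by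
        refine le_trans h4 ?_
        nlinarith [norm_nonneg y0]
      linarith [neg_abs_le ⟪y0, x - x0⟫]
    have h6 : -r0 ≤ |r0| := neg_le_abs r0
    linarith
  have hAne : ∀ b : EuclideanSpace ℝ (Fin d),
      ((fun x => ⟪b, x⟫ - (p x).toReal) '' Dfin).Nonempty :=
    fun b => ⟨_, mem_image_of_mem _ hx0fin⟩
  have hφge : ∀ b x, x ∈ Dfin → ⟪b, x⟫ - (p x).toReal ≤ φ b :=
    fun b x hx => le_csSup (hbddA b) (mem_image_of_mem _ hx)
  -- φ is Lipschitz, hence a.e. differentiable (Rademacher)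
  have hφlip : LipschitzWith (Real.toNNReal R) φ := by
    apply LipschitzWith.of_dist_le_mul
    intro b1 b2
    rw [Real.dist_eq, Real.coe_toNNReal R hR0]
    have key : ∀ c1 c2 : EuclideanSpace ℝ (Fin d), φ c1 ≤ φ c2 + R * dist c1 c2 := by
      intro c1 c2
      apply csSup_le (hAne c1)
      rintro v ⟨x, hx, rfl⟩
      dsimp only
      have h1 : ⟪c1, x⟫ - (p x).toReal = (⟪c2, x⟫ - (p x).toReal) + ⟪c1 - c2, x⟫ := by
        rw [inner_sub_left]; ring
      have h2 : ⟪c1 - c2, x⟫ ≤ R * dist c1 c2 := by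
        refine le_trans (real_inner_le_norm _ _) ?_
        rw [dist_eq_norm]
        have := hR x hx.1
        nlinarith [norm_nonneg (c1 - c2)]
      have h3 := hφge c2 x hx
      linarith
    rw [abs_sub_le_iff]
    constructor
    · linarith [key b1 b2]
    · have := key b2 b1
      rw [dist_comm] at this
      linarith
  have hrad : ∀ᵐ b : EuclideanSpace ℝ (Fin d) ∂volume, DifferentiableAt ℝ φ b :=
    hφlip.ae_differentiableAt (μ := volume)
  have hyN : ∀ᵐ a ∂μ, DifferentiableAt ℝ φ (y a) := by
    refine ae_iff.mpr ?_
    have h0 : volume ((y ⁻¹' {b | ¬ DifferentiableAt ℝ φ b}) ∩ D) = 0 :=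
      hynd _ (ae_iff.1 hrad)
    rw [hμdef, Measure.restrict_apply' hDmeas]
    exact h0
  -- pull the a.e. differentiability of `p` back along `X` and `X'`
  have hmapX : Measure.map X μ = μ := hX.2.2
  have hmapX' : Measure.map X' μ = μ := hX'.2.2
  have hdiffX : ∀ᵐ a ∂μ, X a ∈ D ∧ ∃ f : EuclideanSpace ℝ (Fin d) → ℝ, (∀ᶠ z in nhds (X a), p z = (f z : EReal)) ∧
      HasGradientAt f (ys (X a)) (X a) :=
    ae_of_ae_map hX.1.aemeasurable (by rw [hmapX]; exact hmemD.and hpdiff)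
  have hdiffX' : ∀ᵐ a ∂μ, X' a ∈ D ∧ ∃ f : EuclideanSpace ℝ (Fin d) → ℝ, (∀ᶠ z in nhds (X' a), p z = (f z : EReal)) ∧
      HasGradientAt f (ys (X' a)) (X' a) :=
    ae_of_ae_map hX'.1.aemeasurable (by rw [hmapX']; exact hmemD.and hpdiff)
  -- gradient points give subgradients
  have hSB_of_diff : ∀ x, x ∈ D →
      (∃ f : EuclideanSpace ℝ (Fin d) → ℝ, (∀ᶠ z in nhds x, p z = (f z : EReal)) ∧ HasGradientAt f (ys x) x) →
      x ∈ Dfin ∧ IsSubgrad p (ys x) x := by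
    rintro x hxD ⟨f, hev, hgrad⟩
    have hpx : p x = (f x : EReal) := hev.self_of_nhds
    have hfin : x ∈ Dfin := ⟨hxD, by rw [hpx]; exact EReal.coe_ne_top _⟩
    have hPx : (p x).toReal = f x := by rw [hpx]; exact EReal.toReal_coe _
    refine ⟨hfin, fun z => ?_⟩
    rw [hPx]
    exact subgrad_of_gradient hpconv hev hgrad z
  -- subgradients of `p` are subgradients of `φ`
  have hφsub : ∀ b x, x ∈ Dfin → IsSubgrad p b x → ∀ c, φ b + ⟪x, c - b⟫ ≤ φ c := by
    intro b x hx hSBx c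
    have hφb : φ b = ⟪b, x⟫ - (p x).toReal := by
      refine le_antisymm ?_ (hφge b x hx)
      apply csSup_le (hAne b)
      rintro v ⟨x', hx', rfl⟩
      dsimp only
      have h := hSBx x'
      rw [hPcoe hx'.2, EReal.coe_le_coe_iff, inner_sub_right] at h
      linarith
    have h2 : ⟪c, x⟫ - (p x).toReal ≤ φ c := hφge c x hx
    have h3 : ⟪x, c - b⟫ = ⟪c, x⟫ - ⟪b, x⟫ := by
      rw [real_inner_comm, inner_sub_left]
    rw [hφb, h3]
    linarith
  have huniq : ∀ b x1 x2, DifferentiableAt ℝ φ b → x1 ∈ Dfin → x2 ∈ Dfin →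
      IsSubgrad p b x1 → IsSubgrad p b x2 → x1 = x2 :=
    fun b x1 x2 hd h1 h2 hs1 hs2 =>
      subgrad_unique_of_differentiable hd (hφsub b x1 h1 hs1) (hφsub b x2 h2 hs2)
  -- integrability facts
  have hyL1 : Integrable y μ := hyL2.integrable one_le_two
  have hysL2 : MemLp ys 2 μ := by
    have h1 : MemLp (id : EuclideanSpace ℝ (Fin d) → EuclideanSpace ℝ (Fin d)) 2
        (Measure.map y μ) :=
      (memLp_map_measure_iff aestronglyMeasurable_id hy.aemeasurable).mpr hyL2
    rw [← hysr] at h1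
    exact (memLp_map_measure_iff aestronglyMeasurable_id hysm.aemeasurable).mp h1
  have hysL1 : Integrable ys μ := hysL2.integrable one_le_two
  have hysX'int : Integrable (fun a => ys (X' a)) μ :=
    (integrable_map_measure (by rw [hmapX']; exact hysL1.aestronglyMeasurable)
      hX'.1.aemeasurable).1 (by rw [hmapX']; exact hysL1)
  -- the a.e. facts bundle
  have hfacts : ∀ᵐ a ∂μ, (X a ∈ Dfin ∧ IsSubgrad p (y a) (X a)) ∧
      (X' a ∈ Dfin ∧ IsSubgrad p (ys (X' a)) (X' a)) := by
    filter_upwards [hdiffX, hdiffX', hfact] with a h1 h2 hya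
    obtain ⟨hXaD, hf1⟩ := h1
    obtain ⟨hX'aD, hf2⟩ := h2
    have hA := hSB_of_diff (X a) hXaD hf1
    have hB := hSB_of_diff (X' a) hX'aD hf2
    rw [hya]
    exact ⟨hA, hB⟩
  -- the function Q (the potential minus its supporting affine function at x0)
  set Q : EuclideanSpace ℝ (Fin d) → ℝ :=
    fun z => (p z).toReal - r0 - ⟪y0, z - x0⟫ with hQdef
  have hQmeas : Measurable Q := by
    apply Measurable.sub
    · exact (measurable_ereal_toReal.comp hpmeas).sub measurable_const
    · exact (Continuous.inner continuous_const (continuous_id.sub continuous_const)).measurable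
  have hQbounds : ∀ b x, x ∈ Dfin → IsSubgrad p b x →
      0 ≤ Q x ∧ Q x ≤ ⟪b - y0, x - x0⟫ := by
    intro b x hx hSBx
    constructor
    · have := hPlow x hx
      show (0:ℝ) ≤ (p x).toReal - r0 - ⟪y0, x - x0⟫
      linarith
    · have h := hSBx x0
      rw [hpx0, EReal.coe_le_coe_iff] at h
      have h2 : ⟪b, x0 - x⟫ = -⟪b, x - x0⟫ := by
        rw [← inner_neg_right, neg_sub]
      rw [h2] at h
      have h3 : ⟪b - y0, x - x0⟫ = ⟪b, x - x0⟫ - ⟪y0, x - x0⟫ := inner_sub_left _ _ _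
      show (p x).toReal - r0 - ⟪y0, x - x0⟫ ≤ ⟪b - y0, x - x0⟫
      rw [h3]
      linarith
  -- integrable building blocks
  have hXbdd : ∀ᵐ a ∂μ, ‖X a‖ ≤ R := by
    filter_upwards [hdiffX] with a ha using hR _ ha.1
  have hX'bdd : ∀ᵐ a ∂μ, ‖X' a‖ ≤ R := by
    filter_upwards [hdiffX'] with a ha using hR _ ha.1
  have hiX : Integrable (fun a => ⟪X a, y a⟫) μ := by
    refine Integrable.mono' (hyL1.norm.const_mul R) ((hX.1.inner hy).aestronglyMeasurable) ?_
    filter_upwards [hXbdd] with a ha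
    rw [Real.norm_eq_abs]
    have h1 := abs_real_inner_le_norm (X a) (y a)
    nlinarith [norm_nonneg (y a)]
  have hiX' : Integrable (fun a => ⟪X' a, y a⟫) μ := by
    refine Integrable.mono' (hyL1.norm.const_mul R) ((hX'.1.inner hy).aestronglyMeasurable) ?_
    filter_upwards [hX'bdd] with a ha
    rw [Real.norm_eq_abs]
    have h1 := abs_real_inner_le_norm (X' a) (y a)
    nlinarith [norm_nonneg (y a)]
  have hi0X : Integrable (fun a => ⟪X a, y0⟫) μ := by
    refine Integrable.mono' (integrable_const (R * ‖y0‖)) ((hX.1.inner measurable_const).aestronglyMeasurable) ?_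
    filter_upwards [hXbdd] with a ha
    rw [Real.norm_eq_abs]
    have h1 := abs_real_inner_le_norm (X a) y0
    nlinarith [norm_nonneg y0]
  have hi0X' : Integrable (fun a => ⟪X' a, y0⟫) μ := by
    refine Integrable.mono' (integrable_const (R * ‖y0‖)) ((hX'.1.inner measurable_const).aestronglyMeasurable) ?_
    filter_upwards [hX'bdd] with a ha
    rw [Real.norm_eq_abs]
    have h1 := abs_real_inner_le_norm (X' a) y0
    nlinarith [norm_nonneg y0]
  have hnX2 : Integrable (fun a => ‖X a‖ ^ 2) μ := by
    refine Integrable.mono' (integrable_const (R ^ 2)) ((hX.1.norm.pow_const 2).aestronglyMeasurable) ?_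
    filter_upwards [hXbdd] with a ha
    rw [Real.norm_eq_abs, abs_of_nonneg (by positivity)]
    nlinarith [norm_nonneg (X a)]
  have hnX'2 : Integrable (fun a => ‖X' a‖ ^ 2) μ := by
    refine Integrable.mono' (integrable_const (R ^ 2)) ((hX'.1.norm.pow_const 2).aestronglyMeasurable) ?_
    filter_upwards [hX'bdd] with a ha
    rw [Real.norm_eq_abs, abs_of_nonneg (by positivity)]
    nlinarith [norm_nonneg (X' a)]
  have hny2 : Integrable (fun a => ‖y a‖ ^ 2) μ :=
    (memLp_two_iff_integrable_sq_norm hyL2.aestronglyMeasurable).1 hyL2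
  have hQXint : Integrable (fun a => Q (X a)) μ := by
    refine Integrable.mono' ((hyL1.sub (integrable_const y0)).norm.mul_const (R + ‖x0‖))
      ((hQmeas.comp hX.1).aestronglyMeasurable) ?_
    filter_upwards [hfacts] with a hfa
    obtain ⟨⟨hXfin, hSBX⟩, _⟩ := hfa
    have hb := hQbounds (y a) (X a) hXfin hSBX
    have h1 : ⟪y a - y0, X a - x0⟫ ≤ ‖y a - y0‖ * (R + ‖x0‖) := by
      refine le_trans (real_inner_le_norm _ _) ?_
      have hxx : ‖X a - x0‖ ≤ R + ‖x0‖ := by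
        refine le_trans (norm_sub_le _ _) ?_
        have := hR _ hXfin.1
        linarith
      nlinarith [norm_nonneg (y a - y0)]
    simp only [Pi.sub_apply]
    rw [Real.norm_eq_abs, abs_of_nonneg hb.1]
    linarith [hb.2, h1]
  have hQX'int : Integrable (fun a => Q (X' a)) μ := by
    refine Integrable.mono' ((hysX'int.sub (integrable_const y0)).norm.mul_const (R + ‖x0‖))
      ((hQmeas.comp hX'.1).aestronglyMeasurable) ?_
    filter_upwards [hfacts] with a hfa
    obtain ⟨_, hX'fin, hSBX'⟩ := hfa
    have hb := hQbounds (ys (X' a)) (X' a) hX'fin hSBX'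
    have h1 : ⟪ys (X' a) - y0, X' a - x0⟫ ≤ ‖ys (X' a) - y0‖ * (R + ‖x0‖) := by
      refine le_trans (real_inner_le_norm _ _) ?_
      have hxx : ‖X' a - x0‖ ≤ R + ‖x0‖ := by
        refine le_trans (norm_sub_le _ _) ?_
        have := hR _ hX'fin.1
        linarith
      nlinarith [norm_nonneg (ys (X' a) - y0)]
    simp only [Pi.sub_apply]
    rw [Real.norm_eq_abs, abs_of_nonneg hb.1]
    linarith [hb.2, h1]
  -- pushforward invariance of integrals
  have hpush : ∀ g : EuclideanSpace ℝ (Fin d) → ℝ, Measurable g →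
      (∫ a, g (X a) ∂μ) = (∫ a, g (X' a) ∂μ) := by
    intro g hg
    have h1 : ∫ z, g z ∂(Measure.map X μ) = ∫ a, g (X a) ∂μ :=
      integral_map hX.1.aemeasurable hg.aestronglyMeasurable
    have h2 : ∫ z, g z ∂(Measure.map X' μ) = ∫ a, g (X' a) ∂μ :=
      integral_map hX'.1.aemeasurable hg.aestronglyMeasurable
    rw [← h1, ← h2, hmapX, hmapX']
  have intQeq : ∫ a, Q (X a) ∂μ = ∫ a, Q (X' a) ∂μ := hpush Q hQmeas
  have int0eq : ∫ a, ⟪X a, y0⟫ ∂μ = ∫ a, ⟪X' a, y0⟫ ∂μ :=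
    hpush (fun z => ⟪z, y0⟫) ((Continuous.inner continuous_id continuous_const).measurable)
  have intn2eq : ∫ a, ‖X a‖ ^ 2 ∂μ = ∫ a, ‖X' a‖ ^ 2 ∂μ :=
    hpush (fun z => ‖z‖ ^ 2) ((continuous_norm.pow 2).measurable)
  -- the defect function W
  set W : EuclideanSpace ℝ (Fin d) → ℝ := fun a =>
    Q (X' a) - Q (X a) - (⟪X' a, y a⟫ - ⟪X a, y a⟫ - ⟪X' a, y0⟫ + ⟪X a, y0⟫) with hWdef
  have hWfacts : ∀ᵐ a ∂μ, 0 ≤ W a ∧ (W a = 0 → IsSubgrad p (y a) (X' a)) := by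
    filter_upwards [hfacts] with a hfa
    obtain ⟨⟨hXfin, hSBX⟩, hX'fin, hSBX'⟩ := hfa
    have hs := hSBX (X' a)
    rw [hPcoe hX'fin.2, EReal.coe_le_coe_iff] at hs
    have hid : W a = (p (X' a)).toReal - (p (X a)).toReal - ⟪y a, X' a - X a⟫ := by
      show Q (X' a) - Q (X a) - (⟪X' a, y a⟫ - ⟪X a, y a⟫ - ⟪X' a, y0⟫ + ⟪X a, y0⟫) = _
      show ((p (X' a)).toReal - r0 - ⟪y0, X' a - x0⟫) - ((p (X a)).toReal - r0 - ⟪y0, X a - x0⟫)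
        - (⟪X' a, y a⟫ - ⟪X a, y a⟫ - ⟪X' a, y0⟫ + ⟪X a, y0⟫) = _
      simp only [inner_sub_right]
      rw [real_inner_comm (X' a) (y a), real_inner_comm (X a) (y a),
        real_inner_comm (X' a) y0, real_inner_comm (X a) y0]
      ring
    constructor
    · rw [hid]
      rw [inner_sub_right] at hs ⊢
      linarith
    · intro hz
      rw [hid] at hz
      intro z
      have h2 := hSBX z
      have h3 : ((p (X' a)).toReal + ⟪y a, z - X' a⟫ : ℝ)
          = ((p (X a)).toReal + ⟪y a, z - X a⟫ : ℝ) := by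
        simp only [inner_sub_right] at hz ⊢
        linarith
      rw [h3]
      exact h2
  have hWint : Integrable W μ :=
    (hQX'int.sub hQXint).sub (((hiX'.sub hiX).sub hi0X').add hi0X)
  have hintW : ∫ a, W a ∂μ = ∫ a, ⟪X a, y a⟫ ∂μ - ∫ a, ⟪X' a, y a⟫ ∂μ := by
    have eA : ∫ a, (Q (X' a) - Q (X a)
          - (⟪X' a, y a⟫ - ⟪X a, y a⟫ - ⟪X' a, y0⟫ + ⟪X a, y0⟫)) ∂μ
        = ∫ a, (Q (X' a) - Q (X a)) ∂μ
          - ∫ a, (⟪X' a, y a⟫ - ⟪X a, y a⟫ - ⟪X' a, y0⟫ + ⟪X a, y0⟫) ∂μ :=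
      integral_sub (hQX'int.sub hQXint) (((hiX'.sub hiX).sub hi0X').add hi0X)
    have eB : ∫ a, (Q (X' a) - Q (X a)) ∂μ = ∫ a, Q (X' a) ∂μ - ∫ a, Q (X a) ∂μ :=
      integral_sub hQX'int hQXint
    have e1 : ∫ a, (⟪X' a, y a⟫ - ⟪X a, y a⟫ - ⟪X' a, y0⟫ + ⟪X a, y0⟫) ∂μ
        = ∫ a, (⟪X' a, y a⟫ - ⟪X a, y a⟫ - ⟪X' a, y0⟫) ∂μ + ∫ a, ⟪X a, y0⟫ ∂μ :=
      integral_add ((hiX'.sub hiX).sub hi0X') hi0X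
    have e2 : ∫ a, (⟪X' a, y a⟫ - ⟪X a, y a⟫ - ⟪X' a, y0⟫) ∂μ
        = ∫ a, (⟪X' a, y a⟫ - ⟪X a, y a⟫) ∂μ - ∫ a, ⟪X' a, y0⟫ ∂μ :=
      integral_sub (hiX'.sub hiX) hi0X'
    have e3 : ∫ a, (⟪X' a, y a⟫ - ⟪X a, y a⟫) ∂μ
        = ∫ a, ⟪X' a, y a⟫ ∂μ - ∫ a, ⟪X a, y a⟫ ∂μ :=
      integral_sub hiX' hiX
    simp only [hWdef]
    rw [eA, eB, e1, e2, e3, intQeq, int0eq]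
    ring
  have hW0 : 0 ≤ ∫ a, W a ∂μ := by
    apply integral_nonneg_of_ae
    filter_upwards [hWfacts] with a ha using ha.1
  -- expansion of the quadratic cost
  have hexp : ∀ Z : EuclideanSpace ℝ (Fin d) → EuclideanSpace ℝ (Fin d),
      Integrable (fun a => ⟪Z a, y a⟫) μ → Integrable (fun a => ‖Z a‖ ^ 2) μ →
      ∫ a, ‖Z a - y a‖ ^ 2 ∂μ =
        ∫ a, ‖Z a‖ ^ 2 ∂μ - 2 * ∫ a, ⟪Z a, y a⟫ ∂μ + ∫ a, ‖y a‖ ^ 2 ∂μ := by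
    intro Z hiZ hnZ
    have hpt : ∀ a, ‖Z a - y a‖ ^ 2 = ‖Z a‖ ^ 2 - 2 * ⟪Z a, y a⟫ + ‖y a‖ ^ 2 :=
      fun a => norm_sub_sq_real _ _
    have e4 : ∫ a, (‖Z a‖ ^ 2 - 2 * ⟪Z a, y a⟫ + ‖y a‖ ^ 2) ∂μ
        = ∫ a, (‖Z a‖ ^ 2 - 2 * ⟪Z a, y a⟫) ∂μ + ∫ a, ‖y a‖ ^ 2 ∂μ :=
      integral_add (hnZ.sub (hiZ.const_mul 2)) hny2
    have e5 : ∫ a, (‖Z a‖ ^ 2 - 2 * ⟪Z a, y a⟫) ∂μ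
        = ∫ a, ‖Z a‖ ^ 2 ∂μ - ∫ a, (2 * ⟪Z a, y a⟫) ∂μ :=
      integral_sub hnZ (hiZ.const_mul 2)
    have e6 : ∫ a, (2 * ⟪Z a, y a⟫) ∂μ = 2 * ∫ a, ⟪Z a, y a⟫ ∂μ :=
      integral_const_mul 2 _
    rw [integral_congr_ae (Eventually.of_forall hpt), e4, e5, e6]
  have hXexp := hexp X hiX hnX2
  have hX'exp := hexp X' hiX' hnX'2
  have hdiffint : ∫ a, ‖X' a - y a‖ ^ 2 ∂μ - ∫ a, ‖X a - y a‖ ^ 2 ∂μ = 2 * ∫ a, W a ∂μ := by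
    rw [hXexp, hX'exp, hintW, intn2eq]
    ring
  constructor
  · linarith
  · intro heq
    have hWzero : ∫ a, W a ∂μ = 0 := by
      rw [heq] at hdiffint
      linarith
    have hW0ae : W =ᵐ[μ] 0 := by
      refine (integral_eq_zero_iff_of_nonneg_ae ?_ hWint).1 hWzero
      filter_upwards [hWfacts] with a ha using ha.1
    filter_upwards [hfacts, hW0ae, hWfacts, hyN] with a hfa hWa hha hdφ
    obtain ⟨⟨hXfin, hSBX⟩, hX'fin, _⟩ := hfa
    have hSBX'ya : IsSubgrad p (y a) (X' a) := hha.2 (by simpa using hWa)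
    exact huniq (y a) (X' a) (X a) hdφ hX'fin hXfin hSBX'ya hSBX
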